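/- For every γ ≥ 0, the space D^{1,2} is continuously embedded into the weighted space L²_γ with norm ‖φ‖_{L²_γ} = (∫_ℝ |φ(s)|²/r_0(s)^{3+γ} ds)^{1/2}; moreover, for γ > 0 the embedding is compact, i.e., every sequence converging weakly to 0 in D^{1,2} converges strongly to 0 in L²_γ. -/

import Mathlib

open MeasureTheory Filter

/-- `φ` belongs to the space `D^{1,2}`, with weak derivative `v ∈ L²(ℝ)`. -/
def IsD12 (φ v : ℝ → ℝ) : Prop :=
  Continuous φ ∧ MeasureTheory.MemLp v 2 MeasureTheory.volume ∧
    ∀ s : ℝ, φ s = φ 0 + ∫ t in (0 : ℝ)..s, v t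

namespace Stmt3Aux

open Set
open scoped ENNReal NNReal



lemma lint_Iic_eq (f : ℝ → ℝ≥0∞) :
    ∫⁻ x in Iic (0:ℝ), f x = ∫⁻ x in Ici (0:ℝ), f (-x) := by
  have h := (Measure.measurePreserving_neg (volume : Measure ℝ)).setLIntegral_comp_preimage_emb
      (MeasurableEquiv.neg ℝ).measurableEmbedding f (Iic 0)
  have hs : ((Neg.neg : ℝ → ℝ) ⁻¹' (Iic (0:ℝ))) = Ici 0 := by ext x; simp
  rw [hs] at h
  exact h.symm

lemma lint_neg_eq (f : ℝ → ℝ≥0∞) : ∫⁻ x : ℝ, f (-x) = ∫⁻ x, f x :=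
  (Measure.measurePreserving_neg (volume : Measure ℝ)).lintegral_comp_emb
    (MeasurableEquiv.neg ℝ).measurableEmbedding f

lemma shift_lint (a t : ℝ) :
    ∫⁻ s in Ioi t, ENNReal.ofReal ((1+s) ^ a) = ∫⁻ u in Ioi (1+t), ENNReal.ofReal (u ^ a) := by
  have h := (measurePreserving_add_right (volume : Measure ℝ) 1).setLIntegral_comp_preimage_emb
      (measurableEmbedding_addRight 1) (fun u => ENNReal.ofReal (u ^ a)) (Ioi (1+t))
  have hs : ((fun x : ℝ => x + 1) ⁻¹' (Ioi (1+t))) = Ioi t := by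
    ext x; simp [Set.mem_Ioi]
  rw [hs] at h
  rw [← h]
  refine setLIntegral_congr_fun_ae measurableSet_Ioi (Filter.Eventually.of_forall fun x _ => ?_)
  rw [add_comm]

lemma tail_int {a : ℝ} (ha : a < -1) {t : ℝ} (ht : 0 ≤ t) :
    ∫⁻ s in Ioi t, ENNReal.ofReal ((1+s) ^ a) = ENNReal.ofReal (-(1+t) ^ (a+1) / (a+1)) := by
  have h1t : (0:ℝ) < 1 + t := by linarith
  rw [shift_lint, ← ofReal_integral_eq_lintegral_ofReal (integrableOn_Ioi_rpow_of_lt ha h1t)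
    ?_, integral_Ioi_rpow_of_lt ha h1t]
  filter_upwards [ae_restrict_mem measurableSet_Ioi] with x hx
  exact Real.rpow_nonneg (le_of_lt (h1t.trans hx)) _

lemma intOn_shift {a : ℝ} (ha : a < -1) :
    IntegrableOn (fun s : ℝ => (1+s) ^ a) (Ioi (0:ℝ)) := by
  have h := (measurePreserving_add_right (volume : Measure ℝ) 1).integrableOn_comp_preimage
      (measurableEmbedding_addRight 1) (f := fun u : ℝ => u ^ a) (s := Ioi (1:ℝ))
  have hs : ((fun x : ℝ => x + 1) ⁻¹' (Ioi (1:ℝ))) = Ioi 0 := by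
    ext x; simp [Set.mem_Ioi]
  rw [hs] at h
  have := h.2 (integrableOn_Ioi_rpow_of_lt ha one_pos)
  refine this.congr_fun (fun x _ => by simp [Function.comp, add_comm]) measurableSet_Ioi

lemma integrable_one_add_abs {a : ℝ} (ha : a < -1) :
    Integrable (fun s : ℝ => (1+|s|) ^ a) := by
  have hIoi : IntegrableOn (fun s : ℝ => (1+|s|) ^ a) (Ioi (0:ℝ)) := by
    refine (intOn_shift ha).congr_fun (fun x hx => ?_) measurableSet_Ioi
    rw [abs_of_pos hx]
  have hIic : IntegrableOn (fun s : ℝ => (1+|s|) ^ a) (Iic (0:ℝ)) := by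
    have h := (Measure.measurePreserving_neg (volume : Measure ℝ)).integrableOn_comp_preimage
        (MeasurableEquiv.neg ℝ).measurableEmbedding
        (f := fun s : ℝ => (1+|s|) ^ a) (s := Iic (0:ℝ))
    have hs : ((Neg.neg : ℝ → ℝ) ⁻¹' (Iic (0:ℝ))) = Ici 0 := by ext x; simp
    rw [hs] at h
    refine h.1 ?_
    have hIci : IntegrableOn (fun s : ℝ => (1+|s|) ^ a) (Ici (0:ℝ)) := by
      rw [integrableOn_Ici_iff_integrableOn_Ioi]
      exact hIoi
    exact hIci.congr_fun (fun x _ => by simp [Function.comp]) measurableSet_Ici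
  have : IntegrableOn (fun s : ℝ => (1+|s|) ^ a) (Iic 0 ∪ Ioi 0) := hIic.union hIoi
  rwa [Set.Iic_union_Ioi, integrableOn_univ] at this



lemma finIoc (a b : ℝ) : IsFiniteMeasure (volume.restrict (Ioc a b)) :=
  ⟨by rw [Measure.restrict_apply_univ]; exact measure_Ioc_lt_top⟩

lemma ofReal_two : ENNReal.ofReal (2:ℝ) = 2 := by
  norm_num [ENNReal.ofReal_ofNat]

lemma conj22 : Real.HolderConjugate 2 2 := Real.holderConjugate_iff.mpr ⟨one_lt_two, by norm_num⟩

lemma rpow_half_sq {x : ℝ} (hx : 0 ≤ x) : (x ^ ((1:ℝ)/2)) ^ 2 = x := by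
  rw [← Real.rpow_natCast (x ^ ((1:ℝ)/2)) 2, ← Real.rpow_mul hx]
  norm_num

lemma rpow_quarter_sq {x : ℝ} (hx : 0 ≤ x) : (x ^ ((1:ℝ)/4)) ^ 2 = x ^ ((1:ℝ)/2) := by
  rw [← Real.rpow_natCast (x ^ ((1:ℝ)/4)) 2, ← Real.rpow_mul hx]
  norm_num

lemma rpow_two_eq (x : ℝ) : x ^ (2:ℝ) = x ^ (2:ℕ) := by
  rw [← Real.rpow_natCast x 2]; norm_num

lemma cont_quarter : Continuous fun t : ℝ => (1+|t|) ^ ((1:ℝ)/4) :=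
  (continuous_const.add continuous_abs).rpow_const (fun x => Or.inr (by norm_num))

lemma one_le_base (t : ℝ) : (1:ℝ) ≤ 1 + |t| := by
  have := abs_nonneg t; linarith

lemma base_pos (t : ℝ) : (0:ℝ) < 1 + |t| := lt_of_lt_of_le one_pos (one_le_base t)

lemma memg (v : ℝ → ℝ) (hv : MemLp v 2 volume) (a b : ℝ) :
    MemLp (fun t => (1+|t|) ^ ((1:ℝ)/4) * v t) 2 (volume.restrict (Ioc a b)) := by
  set M := (1 + max |a| |b|) ^ ((1:ℝ)/4) with hM
  refine MemLp.of_le ((hv.restrict (Ioc a b)).const_mul M)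
    (cont_quarter.aestronglyMeasurable.mul hv.1.restrict) ?_
  filter_upwards [ae_restrict_mem measurableSet_Ioc] with t ht
  have h1 : |t| ≤ max |a| |b| := abs_le_max_abs_abs ht.1.le ht.2
  have hMnn : 0 ≤ M := Real.rpow_nonneg (by positivity) _
  rw [norm_mul, norm_mul]
  refine mul_le_mul_of_nonneg_right ?_ (norm_nonneg _)
  rw [Real.norm_eq_abs, abs_of_nonneg (Real.rpow_nonneg (base_pos t).le _),
    Real.norm_eq_abs, abs_of_nonneg hMnn]
  exact Real.rpow_le_rpow (base_pos t).le (by linarith) (by norm_num)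

lemma w_int (v : ℝ → ℝ) (hv : MemLp v 2 volume) (a b : ℝ) :
    IntegrableOn (fun t => v t ^ 2 * (1+|t|) ^ ((1:ℝ)/2)) (Ioc a b) volume := by
  have h := (memg v hv a b).integrable_sq
  refine (h.congr ?_ : IntegrableOn _ _ _)
  refine Filter.Eventually.of_forall fun t => ?_
  simp only [mul_pow, rpow_quarter_sq (base_pos t).le]
  ring

lemma cs_w (v : ℝ → ℝ) (hv : MemLp v 2 volume) {s : ℝ} (hs : 0 < s) :
    (∫ t in (0:ℝ)..s, v t) ^ 2 ≤
      2 * (1+s) ^ ((1:ℝ)/2) * ∫ t in Ioc (0:ℝ) s, v t ^ 2 * (1+|t|) ^ ((1:ℝ)/2) := by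
  haveI := finIoc 0 s
  set f : ℝ → ℝ := fun t => (1+|t|) ^ (-((1:ℝ)/4)) with hf
  set g : ℝ → ℝ := fun t => (1+|t|) ^ ((1:ℝ)/4) * v t with hg
  have hfm : MemLp f (ENNReal.ofReal 2) (volume.restrict (Ioc 0 s)) := by
    rw [ofReal_two]
    refine MemLp.of_bound (((continuous_const.add continuous_abs).rpow_const
      (fun x => Or.inl (base_pos x).ne')).aestronglyMeasurable.restrict) 1 ?_
    refine Filter.Eventually.of_forall fun t => ?_
    rw [Real.norm_eq_abs, abs_of_nonneg (Real.rpow_nonneg (base_pos t).le _)]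
    exact Real.rpow_le_one_of_one_le_of_nonpos (one_le_base t) (by norm_num)
  have hgm : MemLp g (ENNReal.ofReal 2) (volume.restrict (Ioc 0 s)) := by
    rw [ofReal_two]; exact memg v hv 0 s
  have H := integral_mul_norm_le_Lp_mul_Lq conj22 hfm hgm
  have hfg : ∀ t, ‖f t‖ * ‖g t‖ = ‖v t‖ := by
    intro t
    rw [hf, hg]
    simp only [norm_mul, Real.norm_eq_abs,
      abs_of_nonneg (Real.rpow_nonneg (base_pos t).le _)]
    rw [← mul_assoc, ← Real.rpow_add (base_pos t)]
    norm_num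
  set A := ∫ t in Ioc (0:ℝ) s, ‖f t‖ ^ (2:ℝ) ∂volume with hA
  set B := ∫ t in Ioc (0:ℝ) s, ‖g t‖ ^ (2:ℝ) ∂volume with hB
  have hA0 : 0 ≤ A :=
    setIntegral_nonneg measurableSet_Ioc fun t _ => Real.rpow_nonneg (norm_nonneg _) _
  have hB0 : 0 ≤ B :=
    setIntegral_nonneg measurableSet_Ioc fun t _ => Real.rpow_nonneg (norm_nonneg _) _
  have hAval : A ≤ 2 * (1+s) ^ ((1:ℝ)/2) := by
    have e : A = ∫ t in (0:ℝ)..s, (1+t) ^ (-((1:ℝ)/2)) := by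
      rw [hA, intervalIntegral.integral_of_le hs.le]
      refine setIntegral_congr_fun measurableSet_Ioc fun t ht => ?_
      rw [hf]
      simp only
      rw [Real.norm_eq_abs, abs_of_nonneg (Real.rpow_nonneg (base_pos t).le _),
        ← Real.rpow_mul (base_pos t).le, abs_of_pos ht.1]
      norm_num
    have e2 : (∫ t in (0:ℝ)..s, (1+t) ^ (-((1:ℝ)/2)))
        = ∫ u in (1:ℝ)..(1+s), u ^ (-((1:ℝ)/2)) := by
      have e3 := intervalIntegral.integral_comp_add_left (a := (0:ℝ)) (b := s)
        (fun u : ℝ => u ^ (-((1:ℝ)/2))) 1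
      simpa using e3
    rw [e, e2, integral_rpow (Or.inl (by norm_num))]
    have h1 : (0:ℝ) < 1 + s := by linarith
    have h2 : (0:ℝ) ≤ (1+s) ^ ((1:ℝ)/2) := Real.rpow_nonneg h1.le _
    have h3 : (1:ℝ) ^ (-((1:ℝ)/2) + 1) = 1 := Real.one_rpow _
    rw [h3]
    norm_num
    nlinarith [Real.rpow_nonneg h1.le ((1:ℝ)/2)]
  have hBval : B = ∫ t in Ioc (0:ℝ) s, v t ^ 2 * (1+|t|) ^ ((1:ℝ)/2) := by
    rw [hB]
    refine setIntegral_congr_fun measurableSet_Ioc fun t _ => ?_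
    rw [hg]
    simp only
    rw [Real.norm_eq_abs, rpow_two_eq, sq_abs, mul_pow, rpow_quarter_sq (base_pos t).le]
    ring
  have habs : |∫ t in (0:ℝ)..s, v t| ≤ A ^ ((1:ℝ)/2) * B ^ ((1:ℝ)/2) := by
    calc |∫ t in (0:ℝ)..s, v t| = |∫ t in Ioc (0:ℝ) s, v t| := by
          rw [intervalIntegral.integral_of_le hs.le]
      _ ≤ ∫ t in Ioc (0:ℝ) s, ‖v t‖ ∂volume := by
          simpa using norm_integral_le_integral_norm (μ := volume.restrict (Ioc (0:ℝ) s)) v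
      _ = ∫ t in Ioc (0:ℝ) s, ‖f t‖ * ‖g t‖ ∂volume := by
          refine (setIntegral_congr_fun measurableSet_Ioc fun t _ => (hfg t).symm)
      _ ≤ A ^ ((1:ℝ)/2) * B ^ ((1:ℝ)/2) := by simpa using H
  have hsq := pow_le_pow_left₀ (abs_nonneg _) habs 2
  rw [sq_abs, mul_pow, rpow_half_sq hA0, rpow_half_sq hB0] at hsq
  calc (∫ t in (0:ℝ)..s, v t) ^ 2 ≤ A * B := hsq
    _ ≤ 2 * (1+s) ^ ((1:ℝ)/2) * B := mul_le_mul_of_nonneg_right hAval hB0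
    _ = 2 * (1+s) ^ ((1:ℝ)/2) * ∫ t in Ioc (0:ℝ) s, v t ^ 2 * (1+|t|) ^ ((1:ℝ)/2) := by
        rw [hBval]



lemma cont_rpow (p : ℝ) : Continuous fun t : ℝ => (1+|t|) ^ p :=
  (continuous_const.add continuous_abs).rpow_const (fun x => Or.inl (base_pos x).ne')

noncomputable def W (v : ℝ → ℝ) : ℝ → ℝ≥0∞ :=
  fun t => ENNReal.ofReal (v t ^ 2 * (1+|t|) ^ ((1:ℝ)/2))

noncomputable def G : ℝ → ℝ≥0∞ := fun s => ENNReal.ofReal (2 * (1+|s|) ^ (-((3:ℝ)/2)))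

lemma Wm {v : ℝ → ℝ} (hvm : Measurable v) : Measurable (W v) :=
  ((hvm.pow_const 2).mul (cont_rpow ((1:ℝ)/2)).measurable).ennreal_ofReal

lemma Gm : Measurable G :=
  (measurable_const.mul (cont_rpow (-((3:ℝ)/2))).measurable).ennreal_ofReal

-- placeholders for already-proved lemmas (to be merged)
lemma tail_int_abs {a : ℝ} (ha : a < -1) {t : ℝ} (ht : 0 ≤ t) :
    ∫⁻ s in Ioi t, ENNReal.ofReal ((1+|s|) ^ a) = ENNReal.ofReal (-(1+t) ^ (a+1) / (a+1)) := by
  rw [setLIntegral_congr_fun_ae measurableSet_Ioi (Filter.Eventually.of_forall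
    (fun s hs => by rw [abs_of_pos (lt_of_le_of_lt ht hs)]))]
  exact tail_int ha ht

lemma hardy (v : ℝ → ℝ) (hvm : Measurable v) (hv : MemLp v 2 volume) :
    ∫⁻ s in Ioi (0:ℝ), ENNReal.ofReal ((∫ t in (0:ℝ)..s, v t) ^ 2 / (1+s)^2)
      ≤ 4 * ∫⁻ t, ENNReal.ofReal (v t ^ 2) := by
  have step1 : ∀ s ∈ Ioi (0:ℝ), ENNReal.ofReal ((∫ t in (0:ℝ)..s, v t) ^ 2 / (1+s)^2)
      ≤ G s * ∫⁻ t in Ioc (0:ℝ) s, W v t := by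
    intro s hs
    rw [Set.mem_Ioi] at hs
    have h1s : (0:ℝ) < 1 + s := by linarith
    have hBcs := cs_w v hv hs
    set B := ∫ t in Ioc (0:ℝ) s, v t ^ 2 * (1+|t|) ^ ((1:ℝ)/2) with hBdef
    have hB0 : 0 ≤ B := setIntegral_nonneg measurableSet_Ioc fun t _ => by positivity
    have hpow : (1+s) ^ ((1:ℝ)/2) / (1+s)^2 = (1+s) ^ (-((3:ℝ)/2)) := by
      rw [← Real.rpow_natCast (1+s) 2, ← Real.rpow_sub h1s]
      norm_num
    have key : (∫ t in (0:ℝ)..s, v t) ^ 2 / (1+s)^2 ≤ (2 * (1+|s|) ^ (-((3:ℝ)/2))) * B := by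
      rw [abs_of_pos hs]
      calc (∫ t in (0:ℝ)..s, v t) ^ 2 / (1+s)^2
          ≤ (2 * (1+s) ^ ((1:ℝ)/2) * B) / (1+s)^2 := by
            gcongr
        _ = (2 * (1+s) ^ (-((3:ℝ)/2))) * B := by rw [← hpow]; ring
    calc ENNReal.ofReal ((∫ t in (0:ℝ)..s, v t) ^ 2 / (1+s)^2)
        ≤ ENNReal.ofReal ((2 * (1+|s|) ^ (-((3:ℝ)/2))) * B) := ENNReal.ofReal_le_ofReal key
      _ = G s * ENNReal.ofReal B := by
          rw [ENNReal.ofReal_mul (by positivity)]; rfl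
      _ = G s * ∫⁻ t in Ioc (0:ℝ) s, W v t := by
          rw [hBdef, ofReal_integral_eq_lintegral_ofReal (w_int v hv 0 s)
            (Filter.Eventually.of_forall fun t => by positivity)]
          rfl
  have step2 : ∫⁻ s in Ioi (0:ℝ), ENNReal.ofReal ((∫ t in (0:ℝ)..s, v t) ^ 2 / (1+s)^2)
      ≤ ∫⁻ s in Ioi (0:ℝ), G s * ∫⁻ t in Ioc (0:ℝ) s, W v t := by
    refine lintegral_mono_ae ?_
    filter_upwards [ae_restrict_mem measurableSet_Ioi] with s hs
    exact step1 s hs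
  refine step2.trans ?_
  -- Tonelli
  set F : ℝ → ℝ → ℝ≥0∞ := fun s t => G s * (Ioc (0:ℝ) s).indicator (W v) t with hF
  have hinner : ∀ s : ℝ, ∫⁻ t, F s t = G s * ∫⁻ t in Ioc (0:ℝ) s, W v t := by
    intro s
    rw [hF]
    simp only
    rw [lintegral_const_mul _ ((Wm hvm).indicator measurableSet_Ioc),
      lintegral_indicator measurableSet_Ioc]
  have hFm : AEMeasurable (Function.uncurry F)
      ((volume.restrict (Ioi (0:ℝ))).prod volume) := by
    have hSm : MeasurableSet {q : ℝ × ℝ | 0 < q.2 ∧ q.2 ≤ q.1} :=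
      (measurableSet_lt measurable_const measurable_snd).inter
        (measurableSet_le measurable_snd measurable_fst)
    have : Function.uncurry F =
        Set.indicator {q : ℝ × ℝ | 0 < q.2 ∧ q.2 ≤ q.1} (fun q => G q.1 * W v q.2) := by
      funext p
      rw [Function.uncurry, hF]
      simp only [Set.indicator, Set.mem_Ioc, Set.mem_setOf_eq]
      by_cases h : 0 < p.2 ∧ p.2 ≤ p.1 <;> simp [h]
    rw [this]
    exact (((Gm.comp measurable_fst).mul ((Wm hvm).comp measurable_snd)).indicator hSm).aemeasurable
  have hswap : ∫⁻ s in Ioi (0:ℝ), ∫⁻ t, F s t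
      = ∫⁻ t, ∫⁻ s in Ioi (0:ℝ), F s t := lintegral_lintegral_swap hFm
  have hpt : ∀ t : ℝ, (∫⁻ s in Ioi (0:ℝ), F s t) ≤ 4 * ENNReal.ofReal (v t ^ 2) := by
    intro t
    by_cases ht : 0 < t
    · have hFt : ∀ s : ℝ, F s t = (Ici t).indicator (fun s => G s * W v t) s := by
        intro s
        rw [hF]
        simp only [Set.indicator, Set.mem_Ioc, Set.mem_Ici]
        by_cases h : t ≤ s <;> simp [h, ht]
      calc ∫⁻ s in Ioi (0:ℝ), F s t
          = ∫⁻ s in Ioi (0:ℝ), (Ici t).indicator (fun s => G s * W v t) s := by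
            refine lintegral_congr fun s => hFt s
        _ = ∫⁻ s in Ici t ∩ Ioi (0:ℝ), G s * W v t := by
            rw [lintegral_indicator measurableSet_Ici, Measure.restrict_restrict measurableSet_Ici]
        _ = ∫⁻ s in Ioi t, G s * W v t := by
            have hsub : Ici t ∩ Ioi (0:ℝ) = Ici t :=
              Set.inter_eq_left.2 fun x hx => lt_of_lt_of_le ht hx
            rw [hsub]
            exact setLIntegral_congr (Ioi_ae_eq_Ici (a := t)).symm
        _ = (∫⁻ s in Ioi t, G s) * W v t := lintegral_mul_const _ Gm
        _ ≤ 4 * ENNReal.ofReal (v t ^ 2) := by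
            have h1t : (0:ℝ) < 1 + t := by linarith
            set X := -(1+t) ^ (-((3:ℝ)/2)+1) / (-((3:ℝ)/2)+1) with hXdef
            have htail : (∫⁻ s in Ioi t, G s) = 2 * ENNReal.ofReal X := by
              have e1 : ∫⁻ s in Ioi t, G s
                  = ∫⁻ s in Ioi t, ENNReal.ofReal 2 * ENNReal.ofReal ((1+|s|) ^ (-((3:ℝ)/2))) := by
                refine lintegral_congr fun s => ?_
                rw [G, ENNReal.ofReal_mul (by norm_num)]
              rw [e1, lintegral_const_mul _ (cont_rpow (-((3:ℝ)/2))).measurable.ennreal_ofReal,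
                tail_int_abs (by norm_num) ht.le, ofReal_two]
            have hX : X = 2 * (1+t) ^ (-((1:ℝ)/2)) := by
              have he : (-((3:ℝ)/2) + 1) = -((1:ℝ)/2) := by norm_num
              rw [hXdef, he]; ring
            have hX0 : 0 ≤ X := by rw [hX]; positivity
            have hXY : X * (v t ^ 2 * (1+|t|) ^ ((1:ℝ)/2)) = 2 * v t ^ 2 := by
              rw [abs_of_pos ht, hX]
              have hc : (1+t) ^ (-((1:ℝ)/2)) * (1+t) ^ ((1:ℝ)/2) = 1 := by
                rw [← Real.rpow_add h1t]; norm_num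
              calc 2 * (1+t) ^ (-((1:ℝ)/2)) * (v t ^ 2 * (1+t) ^ ((1:ℝ)/2))
                  = 2 * v t ^ 2 * ((1+t) ^ (-((1:ℝ)/2)) * (1+t) ^ ((1:ℝ)/2)) := by ring
                _ = 2 * v t ^ 2 := by rw [hc]; ring
            rw [htail, W]
            rw [mul_assoc, ← ENNReal.ofReal_mul hX0, hXY,
              ENNReal.ofReal_mul (by norm_num : (0:ℝ) ≤ 2), ofReal_two, ← mul_assoc]
            norm_num
    · have hFt : ∀ s : ℝ, F s t = 0 := by
        intro s
        rw [hF]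
        simp only [Set.indicator, Set.mem_Ioc]
        have : ¬ (0 < t ∧ t ≤ s) := fun h => ht h.1
        simp [this]
      simp [lintegral_congr hFt]
  calc ∫⁻ s in Ioi (0:ℝ), G s * ∫⁻ t in Ioc (0:ℝ) s, W v t
      = ∫⁻ s in Ioi (0:ℝ), ∫⁻ t, F s t := by
        refine lintegral_congr fun s => (hinner s).symm
    _ = ∫⁻ t, ∫⁻ s in Ioi (0:ℝ), F s t := hswap
    _ ≤ ∫⁻ t, 4 * ENNReal.ofReal (v t ^ 2) := lintegral_mono hpt
    _ = 4 * ∫⁻ t, ENNReal.ofReal (v t ^ 2) :=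
        lintegral_const_mul _ (hvm.pow_const 2).ennreal_ofReal


lemma cs_Ioc (v : ℝ → ℝ) (hv : MemLp v 2 volume) {a b : ℝ} (hab : a ≤ b) :
    (∫ t in Ioc a b, v t) ^ 2 ≤ (b - a) * ∫ t, v t ^ 2 := by
  haveI := finIoc a b
  have h1 : MemLp (fun _ : ℝ => (1:ℝ)) (ENNReal.ofReal 2) (volume.restrict (Ioc a b)) := by
    rw [ofReal_two]; exact memLp_const 1
  have h2 : MemLp v (ENNReal.ofReal 2) (volume.restrict (Ioc a b)) := by
    rw [ofReal_two]; exact hv.restrict _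
  have H := integral_mul_norm_le_Lp_mul_Lq conj22 h1 h2
  have e1 : ∫ t in Ioc a b, ‖(1:ℝ)‖ ^ (2:ℝ) ∂volume = b - a := by
    simp [Real.volume_Ioc, ENNReal.toReal_ofReal (by linarith : (0:ℝ) ≤ b - a), hab]
  have hIsq : Integrable (fun t => v t ^ 2) volume := hv.integrable_sq
  have e2 : ∫ t in Ioc a b, ‖v t‖ ^ (2:ℝ) ∂volume ≤ ∫ t, v t ^ 2 := by
    have : ∀ t : ℝ, ‖v t‖ ^ (2:ℝ) = v t ^ 2 := fun t => by
      rw [show (2:ℝ) = ((2:ℕ):ℝ) by norm_num, Real.rpow_natCast]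
      exact sq_abs (v t)
    rw [show (fun t => ‖v t‖ ^ (2:ℝ)) = fun t => v t ^ 2 from funext this]
    exact setIntegral_le_integral hIsq (Filter.Eventually.of_forall fun t => sq_nonneg _)
  have hI0 : 0 ≤ ∫ t, v t ^ 2 := integral_nonneg fun t => sq_nonneg _
  have habs : |∫ t in Ioc a b, v t| ≤ (b - a) ^ ((1:ℝ)/2) * (∫ t, v t ^ 2) ^ ((1:ℝ)/2) := by
    calc |∫ t in Ioc a b, v t| ≤ ∫ t in Ioc a b, ‖v t‖ ∂volume := by
          simpa using norm_integral_le_integral_norm (μ := volume.restrict (Ioc a b)) v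
      _ = ∫ t in Ioc a b, ‖(1:ℝ)‖ * ‖v t‖ ∂volume := by simp
      _ ≤ (∫ t in Ioc a b, ‖(1:ℝ)‖ ^ (2:ℝ) ∂volume) ^ ((1:ℝ)/2) *
            (∫ t in Ioc a b, ‖v t‖ ^ (2:ℝ) ∂volume) ^ ((1:ℝ)/2) := by
          simpa using H
      _ ≤ (b - a) ^ ((1:ℝ)/2) * (∫ t, v t ^ 2) ^ ((1:ℝ)/2) := by
          rw [e1]
          refine mul_le_mul_of_nonneg_left ?_ (Real.rpow_nonneg (by linarith) _)
          refine Real.rpow_le_rpow ?_ e2 (by norm_num)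
          refine setIntegral_nonneg measurableSet_Ioc fun t _ => Real.rpow_nonneg (norm_nonneg _) _
  have hsq := pow_le_pow_left₀ (abs_nonneg _) habs 2
  rw [sq_abs, mul_pow, rpow_half_sq (by linarith : (0:ℝ) ≤ b - a), rpow_half_sq hI0] at hsq
  exact hsq


lemma pt_bound (v : ℝ → ℝ) (hv : MemLp v 2 volume) (s : ℝ) :
    (∫ t in (0:ℝ)..s, v t) ^ 2 ≤ |s| * ∫ t, v t ^ 2 := by
  rcases le_or_gt 0 s with h | h
  · rw [intervalIntegral.integral_of_le h, abs_of_nonneg h]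
    simpa using cs_Ioc v hv h
  · rw [intervalIntegral.integral_of_ge h.le, neg_pow, abs_of_neg h]
    simpa using cs_Ioc v hv h.le (a := s) (b := 0)



lemma den_bound (r0 : ℝ → ℝ) (c : ℝ) (hc : 0 < c)
    (hlow : ∀ s : ℝ, c * (1 + |s|) ^ ((2 : ℝ) / 3) ≤ r0 s) {γ : ℝ} (hγ : 0 ≤ γ) (s : ℝ) :
    c ^ ((3:ℝ)+γ) * (1+|s|) ^ (2*((3:ℝ)+γ)/3) ≤ r0 s ^ ((3:ℝ)+γ) := by
  have h1 : (0:ℝ) ≤ c * (1+|s|) ^ ((2:ℝ)/3) := by positivity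
  have h2 := Real.rpow_le_rpow h1 (hlow s) (by linarith : (0:ℝ) ≤ 3+γ)
  rw [Real.mul_rpow hc.le (Real.rpow_nonneg (base_pos s).le _),
    ← Real.rpow_mul (base_pos s).le, show (2:ℝ)/3*(3+γ) = 2*(3+γ)/3 by ring] at h2
  exact h2

lemma part1 (r0 : ℝ → ℝ) (c : ℝ) (hc : 0 < c) (hr0c : Continuous r0)
    (hlow : ∀ s : ℝ, c * (1 + |s|) ^ ((2 : ℝ) / 3) ≤ r0 s)
    (γ : ℝ) (hγ : 0 ≤ γ) :
    ∃ K : ℝ, 0 < K ∧ ∀ φ v : ℝ → ℝ,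
      (Continuous φ ∧ MemLp v 2 volume ∧ ∀ s : ℝ, φ s = φ 0 + ∫ t in (0:ℝ)..s, v t) →
      (∫ s : ℝ, (φ s) ^ 2 / (r0 s) ^ ((3 : ℝ) + γ)) ≤
        K * ((φ 0) ^ 2 + ∫ t : ℝ, (v t) ^ 2) := by
  have hr0pos : ∀ s, 0 < r0 s := fun s =>
    lt_of_lt_of_le (by positivity) (hlow s)
  have hcP : (0:ℝ) < c ^ ((3:ℝ)+γ) := Real.rpow_pos_of_pos hc _
  refine ⟨32 / c ^ ((3:ℝ)+γ), by positivity, ?_⟩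
  intro φ v hD
  obtain ⟨hφc, hv, hrep0⟩ := hD
  -- measurable representative of v
  set v' : ℝ → ℝ := hv.1.mk v with hv'def
  have hvv' : v =ᵐ[volume] v' := hv.1.ae_eq_mk
  have hm : Measurable v' := hv.1.stronglyMeasurable_mk.measurable
  have hv' : MemLp v' 2 volume := hv.ae_eq hvv'
  have hrep : ∀ s : ℝ, φ s = φ 0 + ∫ t in (0:ℝ)..s, v' t := by
    intro s
    rw [hrep0 s]
    congr 1
    refine intervalIntegral.integral_congr_ae ?_
    filter_upwards [hvv'] with t ht _
    exact ht
  have hvint : ∫ t, v t ^ 2 = ∫ t, v' t ^ 2 := by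
    refine integral_congr_ae ?_
    filter_upwards [hvv'] with t ht
    rw [ht]
  have hI0 : 0 ≤ ∫ t, v' t ^ 2 := integral_nonneg fun t => sq_nonneg _
  set P := (3:ℝ) + γ with hP
  set φ0 := φ 0 with hφ0
  -- the three auxiliary functions
  set f : ℝ → ℝ := fun s => φ s ^ 2 / r0 s ^ P with hfdef
  set h1 : ℝ → ℝ := fun s => φ0 ^ 2 * ((1+|s|) ^ (2:ℕ))⁻¹ with h1def
  set h2 : ℝ → ℝ := fun s => (φ s - φ0) ^ 2 / (1+|s|) ^ (2:ℕ) with h2def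
  have hbase_sq_pos : ∀ s : ℝ, (0:ℝ) < (1+|s|) ^ (2:ℕ) := fun s => by positivity
  have hden : ∀ s : ℝ, c ^ P * (1+|s|) ^ (2:ℕ) ≤ r0 s ^ P := by
    intro s
    have h2' := den_bound r0 c hc hlow hγ s
    refine le_trans ?_ h2'
    rw [← rpow_two_eq]
    refine mul_le_mul_of_nonneg_left ?_ hcP.le
    refine Real.rpow_le_rpow_of_exponent_le (one_le_base s) (by nlinarith)
  have hpt : ∀ s : ℝ, f s ≤ (2 / c ^ P) * (h1 s + h2 s) := by
    intro s
    have hnum : φ s ^ 2 ≤ 2 * φ0 ^ 2 + 2 * (φ s - φ0) ^ 2 := by nlinarith [sq_nonneg (φ s - 2 * φ0)]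
    have e1 : f s ≤ (2 * φ0 ^ 2 + 2 * (φ s - φ0) ^ 2) / (c ^ P * (1+|s|) ^ (2:ℕ)) := by
      rw [hfdef]
      exact div_le_div₀ (by positivity) hnum (by positivity) (hden s)
    refine e1.trans (le_of_eq ?_)
    rw [h1def, h2def]
    field_simp
  -- measurability
  have hr0P : Continuous fun s => r0 s ^ P :=
    hr0c.rpow_const fun x => Or.inl (hr0pos x).ne'
  have hfc : Continuous f :=
    (hφc.pow 2).div hr0P fun x => (Real.rpow_pos_of_pos (hr0pos x) P).ne'
  have hf0 : ∀ s, 0 ≤ f s := fun s =>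
    div_nonneg (sq_nonneg _) (Real.rpow_pos_of_pos (hr0pos s) P).le
  have mh1 : Measurable fun s => ENNReal.ofReal (h1 s) := by
    refine Continuous.measurable ?_ |>.ennreal_ofReal
    exact continuous_const.mul (((continuous_const.add continuous_abs).pow 2).inv₀
      fun x => (hbase_sq_pos x).ne')
  have mh2 : Measurable fun s => ENNReal.ofReal (h2 s) := by
    refine Continuous.measurable ?_ |>.ennreal_ofReal
    exact ((hφc.sub continuous_const).pow 2).div ((continuous_const.add continuous_abs).pow 2)
      fun x => (hbase_sq_pos x).ne'
  -- the constant-part lintegral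
  have hM : (∫⁻ s : ℝ, ENNReal.ofReal (((1+|s|) ^ (2:ℕ))⁻¹)) = 2 := by
    have hconv : ∀ s : ℝ, ENNReal.ofReal ((((1:ℝ)+|s|) ^ (2:ℕ))⁻¹)
        = ENNReal.ofReal ((1+|s|) ^ (-(2:ℝ))) := by
      intro s
      rw [Real.rpow_neg (base_pos s).le, rpow_two_eq]
    have hIoi : (∫⁻ s in Ioi (0:ℝ), ENNReal.ofReal (((1+|s|) ^ (2:ℕ))⁻¹)) = 1 := by
      rw [lintegral_congr hconv, tail_int_abs (by norm_num) le_rfl]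
      norm_num
    have hIic : (∫⁻ s in Iic (0:ℝ), ENNReal.ofReal (((1+|s|) ^ (2:ℕ))⁻¹)) = 1 := by
      rw [lint_Iic_eq]
      simp only [abs_neg]
      rw [← setLIntegral_congr (Ioi_ae_eq_Ici (a := (0:ℝ)))]
      exact hIoi
    rw [← lintegral_add_compl (fun s => ENNReal.ofReal (((1+|s|) ^ (2:ℕ))⁻¹))
      measurableSet_Ioi, compl_Ioi, hIoi, hIic]
    norm_num
  -- the Hardy part
  set V := ∫⁻ t, ENNReal.ofReal (v' t ^ 2) with hVdef
  have hH : (∫⁻ s : ℝ, ENNReal.ofReal (h2 s)) ≤ 8 * V := by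
    have hsub : ∀ s : ℝ, φ s - φ0 = ∫ t in (0:ℝ)..s, v' t := fun s => by rw [hrep s]; ring
    have hIoi : (∫⁻ s in Ioi (0:ℝ), ENNReal.ofReal (h2 s)) ≤ 4 * V := by
      have : ∀ s ∈ Ioi (0:ℝ), ENNReal.ofReal (h2 s)
          = ENNReal.ofReal ((∫ t in (0:ℝ)..s, v' t) ^ 2 / (1+s) ^ 2) := by
        intro s hs
        rw [Set.mem_Ioi] at hs
        rw [h2def]
        simp only
        rw [abs_of_pos hs, hsub s]
      rw [setLIntegral_congr_fun_ae measurableSet_Ioi (Filter.Eventually.of_forall this)]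
      exact hardy v' hm hv'
    have hIic : (∫⁻ s in Iic (0:ℝ), ENNReal.ofReal (h2 s)) ≤ 4 * V := by
      set w : ℝ → ℝ := fun t => -v' (-t) with hwdef
      have hwm : Measurable w := (hm.comp measurable_neg).neg
      have hwL2 : MemLp w 2 volume := by
        have := (hv'.comp_measurePreserving (Measure.measurePreserving_neg volume)).neg
        exact this
      have hwrep : ∀ x : ℝ, φ (-x) - φ0 = ∫ t in (0:ℝ)..x, w t := by
        intro x
        have e1 : ∫ t in (0:ℝ)..x, w t = -∫ t in (0:ℝ)..x, v' (-t) := by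
          rw [hwdef]; exact intervalIntegral.integral_neg
        have e2 : ∫ t in (0:ℝ)..x, v' (-t) = ∫ t in (-x)..(0:ℝ), v' t := by
          simpa using intervalIntegral.integral_comp_neg (a := (0:ℝ)) (b := x) v'
        have e3 : -∫ t in (-x)..(0:ℝ), v' t = ∫ t in (0:ℝ)..(-x), v' t :=
          (intervalIntegral.integral_symm _ _).symm
        rw [e1, e2, e3, hsub (-x)]
      have hVw : (∫⁻ t, ENNReal.ofReal (w t ^ 2)) = V := by
        rw [hVdef]
        have : ∀ t : ℝ, ENNReal.ofReal (w t ^ 2) = ENNReal.ofReal (v' (-t) ^ 2) := by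
          intro t; rw [hwdef]; simp [neg_sq]
        rw [lintegral_congr this]
        exact lint_neg_eq fun t => ENNReal.ofReal (v' t ^ 2)
      calc ∫⁻ s in Iic (0:ℝ), ENNReal.ofReal (h2 s)
          = ∫⁻ x in Ici (0:ℝ), ENNReal.ofReal (h2 (-x)) := lint_Iic_eq _
        _ = ∫⁻ x in Ioi (0:ℝ), ENNReal.ofReal (h2 (-x)) :=
            (setLIntegral_congr (Ioi_ae_eq_Ici (a := (0:ℝ)))).symm
        _ = ∫⁻ x in Ioi (0:ℝ), ENNReal.ofReal ((∫ t in (0:ℝ)..x, w t) ^ 2 / (1+x) ^ 2) := by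
            refine setLIntegral_congr_fun_ae measurableSet_Ioi
              (Filter.Eventually.of_forall fun x hx => ?_)
            rw [Set.mem_Ioi] at hx
            rw [h2def]
            simp only
            rw [abs_neg, abs_of_pos hx, hwrep x]
        _ ≤ 4 * ∫⁻ t, ENNReal.ofReal (w t ^ 2) := hardy w hwm hwL2
        _ = 4 * V := by rw [hVw]
    calc (∫⁻ s : ℝ, ENNReal.ofReal (h2 s))
        = (∫⁻ s in Ioi (0:ℝ), ENNReal.ofReal (h2 s))
          + ∫⁻ s in Iic (0:ℝ), ENNReal.ofReal (h2 s) := by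
          rw [← lintegral_add_compl (fun s => ENNReal.ofReal (h2 s)) measurableSet_Ioi, compl_Ioi]
      _ ≤ 4 * V + 4 * V := add_le_add hIoi hIic
      _ = 8 * V := by ring
  -- V is finite and equals the Bochner integral
  have hVval : V = ENNReal.ofReal (∫ t, v' t ^ 2) := by
    rw [hVdef, ofReal_integral_eq_lintegral_ofReal hv'.integrable_sq
      (Filter.Eventually.of_forall fun t => sq_nonneg _)]
  -- main lintegral chain
  have key : (∫⁻ s, ENNReal.ofReal (f s))
      ≤ ENNReal.ofReal ((32 / c ^ P) * (φ0 ^ 2 + ∫ t, v' t ^ 2)) := by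
    calc (∫⁻ s, ENNReal.ofReal (f s))
        ≤ ∫⁻ s, ENNReal.ofReal (2 / c ^ P) *
            (ENNReal.ofReal (h1 s) + ENNReal.ofReal (h2 s)) := by
          refine lintegral_mono fun s => ?_
          rw [← ENNReal.ofReal_add (by positivity) (by positivity),
            ← ENNReal.ofReal_mul (by positivity)]
          exact ENNReal.ofReal_le_ofReal (hpt s)
      _ = ENNReal.ofReal (2 / c ^ P) *
            ((∫⁻ s, ENNReal.ofReal (h1 s)) + ∫⁻ s, ENNReal.ofReal (h2 s)) := by
          rw [lintegral_const_mul _ (f := fun s => ENNReal.ofReal (h1 s) + ENNReal.ofReal (h2 s)) (mh1.add mh2), lintegral_add_left mh1]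
      _ ≤ ENNReal.ofReal (2 / c ^ P) *
            (ENNReal.ofReal (φ0 ^ 2) * 2 + 8 * V) := by
          refine mul_le_mul_right (add_le_add (le_of_eq ?_) hH) _
          have : ∀ s : ℝ, ENNReal.ofReal (h1 s)
              = ENNReal.ofReal (φ0 ^ 2) * ENNReal.ofReal (((1+|s|) ^ (2:ℕ))⁻¹) := by
            intro s
            rw [h1def]
            simp only
            rw [ENNReal.ofReal_mul (sq_nonneg _)]
          rw [lintegral_congr this, lintegral_const_mul _ (by
            refine Continuous.measurable ?_ |>.ennreal_ofReal
            exact ((continuous_const.add continuous_abs).pow 2).inv₀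
              fun x => (hbase_sq_pos x).ne'), hM]
      _ = ENNReal.ofReal ((2 / c ^ P) * (2 * φ0 ^ 2 + 8 * ∫ t, v' t ^ 2)) := by
          rw [hVval, ← ofReal_two]
          rw [← ENNReal.ofReal_mul (sq_nonneg _), show ((8:ℝ≥0∞)) = ENNReal.ofReal (8:ℝ) by
            norm_num [ENNReal.ofReal_ofNat], ← ENNReal.ofReal_mul (by norm_num)]
          rw [← ENNReal.ofReal_add (by positivity) (by positivity),
            ← ENNReal.ofReal_mul (by positivity)]
          rw [mul_comm (φ0 ^ 2) (2:ℝ)]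
      _ ≤ ENNReal.ofReal ((32 / c ^ P) * (φ0 ^ 2 + ∫ t, v' t ^ 2)) := by
          refine ENNReal.ofReal_le_ofReal ?_
          rw [div_mul_eq_mul_div, div_mul_eq_mul_div, div_le_div_iff₀ hcP hcP]
          nlinarith [sq_nonneg φ0]
  -- conclude
  have hfin : ∫ s, f s = (∫⁻ s, ENNReal.ofReal (f s)).toReal := by
    rw [integral_eq_lintegral_of_nonneg_ae (Filter.Eventually.of_forall hf0)
      hfc.aestronglyMeasurable]
  rw [hvint]
  calc ∫ s, f s = (∫⁻ s, ENNReal.ofReal (f s)).toReal := hfin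
    _ ≤ (ENNReal.ofReal ((32 / c ^ P) * (φ0 ^ 2 + ∫ t, v' t ^ 2))).toReal :=
        ENNReal.toReal_mono ENNReal.ofReal_ne_top key
    _ = (32 / c ^ P) * (φ0 ^ 2 + ∫ t, v' t ^ 2) := by
        rw [ENNReal.toReal_ofReal (by positivity)]



lemma part2 (r0 : ℝ → ℝ) (c : ℝ) (hc : 0 < c) (hr0c : Continuous r0)
    (hlow : ∀ s : ℝ, c * (1 + |s|) ^ ((2 : ℝ) / 3) ≤ r0 s)
    (γ : ℝ) (hγ : 0 < γ) (φ : ℕ → ℝ → ℝ) (v : ℕ → ℝ → ℝ)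
    (hD : ∀ n, Continuous (φ n) ∧ MemLp (v n) 2 volume ∧
      ∀ s : ℝ, φ n s = φ n 0 + ∫ t in (0:ℝ)..s, v n t)
    (hK : ∃ K : ℝ, ∀ n, (φ n 0) ^ 2 + ∫ t : ℝ, (v n t) ^ 2 ≤ K)
    (hconv : ∀ s : ℝ, Tendsto (fun n => φ n s) atTop (nhds 0)) :
    Tendsto (fun n => ∫ s : ℝ, (φ n s) ^ 2 / (r0 s) ^ ((3 : ℝ) + γ))
      atTop (nhds 0) := by
  obtain ⟨K, hKb⟩ := hK
  have hr0pos : ∀ s, 0 < r0 s := fun s => lt_of_lt_of_le (by positivity) (hlow s)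
  set P := (3:ℝ) + γ with hP
  have hcP : (0:ℝ) < c ^ P := Real.rpow_pos_of_pos hc _
  have hK0 : 0 ≤ K :=
    le_trans (add_nonneg (sq_nonneg _) (integral_nonneg fun t => sq_nonneg _)) (hKb 0)
  set g : ℝ → ℝ := fun s => (2*K/c^P) * (1+|s|) ^ (-(1:ℝ)-2*γ/3) with hgdef
  have hgint : Integrable g := (integrable_one_add_abs (by linarith)).const_mul _
  have hr0P : Continuous fun s => r0 s ^ P :=
    hr0c.rpow_const fun x => Or.inl (hr0pos x).ne'
  have hr0Ppos : ∀ s, (0:ℝ) < r0 s ^ P := fun s => Real.rpow_pos_of_pos (hr0pos s) P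
  have hFmeas : ∀ n, AEStronglyMeasurable (fun s => (φ n s) ^ 2 / (r0 s) ^ P) volume := by
    intro n
    exact (((hD n).1.pow 2).div hr0P fun x => (hr0Ppos x).ne').aestronglyMeasurable
  have h_bound : ∀ n, ∀ᵐ s : ℝ ∂volume, ‖(φ n s) ^ 2 / (r0 s) ^ P‖ ≤ g s := by
    intro n
    refine Filter.Eventually.of_forall fun s => ?_
    obtain ⟨hφc, hv, hrep⟩ := hD n
    have hI0 : 0 ≤ ∫ t, v n t ^ 2 := integral_nonneg fun t => sq_nonneg _
    have hb : φ n s ^ 2 ≤ 2*K*(1+|s|) := by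
      have h1 := pt_bound (v n) hv s
      have h2 : φ n s ^ 2 ≤ 2 * (φ n 0) ^ 2 + 2 * (∫ t in (0:ℝ)..s, v n t) ^ 2 := by
        rw [hrep s]
        nlinarith [sq_nonneg (φ n 0 - ∫ t in (0:ℝ)..s, v n t)]
      nlinarith [hKb n, abs_nonneg s, sq_nonneg (φ n 0)]
    have hx : (1+|s|) * ((1+|s|) ^ (2*P/3))⁻¹ = (1+|s|) ^ (-(1:ℝ)-2*γ/3) := by
      have e : (1+|s|) ^ (-(1:ℝ)-2*γ/3) = (1+|s|) ^ ((1:ℝ) + -(2*P/3)) := by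
        congr 1
        rw [hP]; ring
      rw [e, Real.rpow_add (base_pos s), Real.rpow_one, Real.rpow_neg (base_pos s).le]
    have hxpos : (0:ℝ) < (1+|s|) ^ (2*P/3) := Real.rpow_pos_of_pos (base_pos s) _
    rw [Real.norm_eq_abs, abs_of_nonneg (div_nonneg (sq_nonneg _) (hr0Ppos s).le)]
    calc (φ n s) ^ 2 / (r0 s) ^ P
        ≤ (2*K*(1+|s|)) / (c ^ P * (1+|s|) ^ (2*P/3)) := by
          refine div_le_div₀ (by positivity) hb (by positivity)
            (den_bound r0 c hc hlow hγ.le s)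
      _ = g s := by
          rw [hgdef]
          simp only
          rw [← hx]
          field_simp
  have h_lim : ∀ᵐ s : ℝ ∂volume,
      Tendsto (fun n => (φ n s) ^ 2 / (r0 s) ^ P) atTop (nhds 0) := by
    refine Filter.Eventually.of_forall fun s => ?_
    have := ((hconv s).mul (hconv s)).div_const ((r0 s) ^ P)
    simp only [mul_zero, zero_div] at this
    refine this.congr fun n => ?_
    rw [pow_two]
  have := tendsto_integral_of_dominated_convergence g hFmeas hgint h_bound h_lim
  simpa using this


end Stmt3Aux

theorem stmt3 (r0 : ℝ → ℝ) (c C : ℝ) (hc : 0 < c) (hC : 0 < C)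
    (hr0c : Continuous r0)
    (hlow : ∀ s : ℝ, c * (1 + |s|) ^ ((2 : ℝ) / 3) ≤ r0 s)
    (hup : ∀ s : ℝ, r0 s ≤ C * (1 + |s|) ^ ((2 : ℝ) / 3)) :
    -- continuous embedding into L²_γ for γ ≥ 0
    (∀ γ : ℝ, 0 ≤ γ → ∃ K : ℝ, 0 < K ∧ ∀ φ v : ℝ → ℝ, IsD12 φ v →
        (∫ s : ℝ, (φ s) ^ 2 / (r0 s) ^ ((3 : ℝ) + γ)) ≤
          K * ((φ 0) ^ 2 + ∫ t : ℝ, (v t) ^ 2)) ∧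
    -- compact embedding for γ > 0: bounded sequences converging weakly (here:
    -- pointwise) to 0 converge strongly to 0 in L²_γ
    (∀ γ : ℝ, 0 < γ → ∀ (φ : ℕ → ℝ → ℝ) (v : ℕ → ℝ → ℝ),
        (∀ n, IsD12 (φ n) (v n)) →
        (∃ K : ℝ, ∀ n, (φ n 0) ^ 2 + ∫ t : ℝ, (v n t) ^ 2 ≤ K) →
        (∀ s : ℝ, Tendsto (fun n => φ n s) atTop (nhds 0)) →
        Tendsto (fun n => ∫ s : ℝ, (φ n s) ^ 2 / (r0 s) ^ ((3 : ℝ) + γ))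
          atTop (nhds 0)) := by
  constructor
  · intro γ hγ
    obtain ⟨K, hK, h⟩ := Stmt3Aux.part1 r0 c hc hr0c hlow γ hγ
    exact ⟨K, hK, fun φ v hD => h φ v hD⟩
  · intro γ hγ φ v hD hK hconv
    exact Stmt3Aux.part2 r0 c hc hr0c hlow γ hγ φ v (fun n => hD n) hK hconv
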